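/- If a division ring D is strongly algebraic over its center, then D is locally linear: every finite subset of D is contained in a division subring of D that embeds in some centrally finite division ring. -/

import Mathlib

universe u

/-- A subring of a division ring that is closed under inverses, i.e. a division subring. -/
def IsDivisionSubring {D : Type u} [DivisionRing D] (E : Subring D) : Prop :=
  ∀ x ∈ E, x⁻¹ ∈ E

/-- The division subring of `D` generated by a set `S`. -/
def divClosure (D : Type u) [DivisionRing D] (S : Set D) : Subring D :=
  sInf {E : Subring D | S ⊆ E ∧ IsDivisionSubring E}

/-- A maximal subfield of a division ring `D`: a commutative division subring containing the
center which is maximal among commutative division subrings. -/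
def IsMaximalSubfield (D : Type u) [DivisionRing D] (K : Subring D) : Prop :=
  IsDivisionSubring K ∧ (∀ x ∈ K, ∀ y ∈ K, x * y = y * x) ∧ Subring.center D ≤ K ∧
    ∀ K' : Subring D, IsDivisionSubring K' → (∀ x ∈ K', ∀ y ∈ K', x * y = y * x) →
      K ≤ K' → K' = K

/-- A division ring is centrally finite if it is a finite-dimensional vector space over its
center. -/
def IsCentrallyFinite (D : Type u) [DivisionRing D] : Prop :=
  Module.Finite (Subring.center D) D

/-- A division ring `D` is strongly algebraic over its center `F` if it is algebraic over `F`
and it has a maximal subfield `K = F(S)` such that every `x ∈ D` fails to commute with only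
finitely many elements of `S`. -/
def IsStronglyAlgebraic (D : Type u) [DivisionRing D] : Prop :=
  (∀ a : D, IsAlgebraic (Subring.center D) a) ∧
  ∃ (K : Subring D) (S : Set D), IsMaximalSubfield D K ∧ S ⊆ K ∧
    K = divClosure D ((Subring.center D : Set D) ∪ S) ∧
    ∀ x : D, {y ∈ S | x * y ≠ y * x}.Finite

/-- An embedding of a ring into some centrally finite division ring. -/
structure CFEmbedding (R : Type u) [Ring R] : Type (u + 1) where
  L : Type u
  [instL : DivisionRing L]
  f : R →+* L
  inj : Function.Injective f
  cf : IsCentrallyFinite L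

/-- A division ring is locally linear if every finite subset is contained in a division
subring that embeds in some centrally finite division ring. -/
def IsLocallyLinear (D : Type u) [DivisionRing D] : Prop :=
  ∀ S : Finset D, ∃ E : Subring D, (S : Set D) ⊆ E ∧ IsDivisionSubring E ∧
    Nonempty (CFEmbedding E)

/-- A subgroup is subnormal if there is a finite chain of successively normal subgroups
reaching the whole group. -/
def IsSubnormal {G : Type u} [Group G] (N : Subgroup G) : Prop :=
  ∃ (n : ℕ) (c : ℕ → Subgroup G), c 0 = N ∧ c n = ⊤ ∧
    ∀ i < n, c i ≤ c (i + 1) ∧ ∀ x ∈ c (i + 1), ∀ h ∈ c i, x * h * x⁻¹ ∈ c i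

/-- A division subring `E` of `D` is centrally finite if `E` is spanned over its own center by
finitely many elements. -/
def IsCentrallyFiniteSubring {D : Type u} [DivisionRing D] (E : Subring D) : Prop :=
  ∃ B : Finset D, (B : Set D) ⊆ E ∧ ∀ x ∈ E, ∃ c : D → D,
    (∀ b ∈ B, c b ∈ E ∧ ∀ y ∈ E, c b * y = y * c b) ∧ x = ∑ b ∈ B, c b * b



section Aux

variable {D : Type u} [DivisionRing D]

/-- Division ring structure on a division subring. -/
@[reducible]
def IsDivisionSubring.divisionRing {E : Subring D} (hE : IsDivisionSubring E) :
    DivisionRing ↥E :=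
  { (inferInstance : Ring ↥E) with
    inv := fun x => ⟨(x : D)⁻¹, hE x x.2⟩
    div := fun x y => ⟨(x : D) * (y : D)⁻¹, E.mul_mem x.2 (hE y y.2)⟩
    div_eq_mul_inv := fun a b => rfl
    mul_inv_cancel := fun a ha => by
      apply Subtype.ext
      have : (a : D) ≠ 0 := fun h => ha (Subtype.ext h)
      exact mul_inv_cancel₀ this
    inv_zero := Subtype.ext inv_zero
    exists_pair_ne := ⟨0, 1, fun h => by
      have := congrArg (Subtype.val) h
      simp at this⟩
    nnqsmul := _
    qsmul := _ }

/-- Field structure on a commutative division subring. -/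
@[reducible]
def fieldOfComm {E : Subring D} (hE : IsDivisionSubring E)
    (hc : ∀ x ∈ E, ∀ y ∈ E, x * y = y * x) : Field ↥E :=
  { hE.divisionRing with
    mul_comm := fun a b => Subtype.ext (hc a a.2 b b.2) }

theorem subset_divClosure (S : Set D) : S ⊆ divClosure D S := fun x hx =>
  Subring.mem_sInf.2 fun _ hE => hE.1 hx

theorem divClosure_isDivisionSubring (S : Set D) : IsDivisionSubring (divClosure D S) :=
  fun x hx => Subring.mem_sInf.2 fun E hE => hE.2 x (Subring.mem_sInf.1 hx E hE)

theorem divClosure_le {S : Set D} {E : Subring D} (hS : S ⊆ E) (hE : IsDivisionSubring E) :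
    divClosure D S ≤ E := sInf_le ⟨hS, hE⟩

theorem centralizer_isDivisionSubring (s : Set D) :
    IsDivisionSubring (Subring.centralizer s) := by
  intro x hx
  rcases eq_or_ne x 0 with rfl | hx0
  · simpa using (Subring.centralizer s).zero_mem
  · rw [Subring.mem_centralizer_iff] at hx ⊢
    intro g hg
    have h := hx g hg
    calc g * x⁻¹ = x⁻¹ * (x * g) * x⁻¹ := by
          rw [← mul_assoc, inv_mul_cancel₀ hx0, one_mul]
      _ = x⁻¹ * (g * x) * x⁻¹ := by rw [h]
      _ = x⁻¹ * g := by rw [mul_assoc, mul_assoc, mul_inv_cancel₀ hx0, mul_one]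

theorem divClosure_comm {S : Set D} (hS : ∀ x ∈ S, ∀ y ∈ S, x * y = y * x) :
    ∀ x ∈ divClosure D S, ∀ y ∈ divClosure D S, x * y = y * x := by
  have h1 : divClosure D S ≤ Subring.centralizer S :=
    divClosure_le (fun s hs => Subring.mem_centralizer_iff.2 fun g hg => hS g hg s hs)
      (centralizer_isDivisionSubring S)
  have h2 : divClosure D S ≤ Subring.centralizer (divClosure D S : Set D) :=
    divClosure_le (fun s hs => Subring.mem_centralizer_iff.2 fun g hg =>
      (Subring.mem_centralizer_iff.1 (h1 hg) s hs).symm) (centralizer_isDivisionSubring _)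
  intro x hx y hy
  exact Subring.mem_centralizer_iff.1 (h2 hy) x hx

/-- Any element commuting with every element of a maximal subfield lies in it. -/
theorem mem_of_comm_maximalSubfield {K : Subring D} (hK : IsMaximalSubfield D K)
    (x : D) (hx : ∀ y ∈ K, x * y = y * x) : x ∈ K := by
  obtain ⟨hKdiv, hKcomm, -, hKmax⟩ := hK
  set S : Set D := (K : Set D) ∪ {x} with hSdef
  have hcomm : ∀ a ∈ S, ∀ b ∈ S, a * b = b * a := by
    rintro a (ha | rfl) b (hb | rfl)
    · exact hKcomm a ha b hb
    · exact (hx a ha).symm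
    · exact hx b hb
    · rfl
  have hle : K ≤ divClosure D S := fun y hy => subset_divClosure S (Or.inl hy)
  have := hKmax (divClosure D S) (divClosure_isDivisionSubring S) (divClosure_comm hcomm) hle
  rw [← this]
  exact subset_divClosure S (Or.inr rfl)

set_option maxHeartbeats 2000000 in
set_option synthInstance.maxHeartbeats 1000000 in
/-- If `K` is a commutative division subring generated (as division ring) by a division
subring `F'` and a finite set `T` of elements algebraic over the center, then `K` is
spanned over `F'` by finitely many elements. -/
theorem span_finite_of_adjoin_algebraic
    {K F' : Subring D} {T : Set D}
    (hKdiv : IsDivisionSubring K) (hKcomm : ∀ x ∈ K, ∀ y ∈ K, x * y = y * x)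
    (hF'div : IsDivisionSubring F') (hFK : F' ≤ K)
    (hcF' : Subring.center D ≤ F')
    (hTfin : T.Finite) (hTK : T ⊆ K)
    (halg : ∀ a : D, IsAlgebraic (Subring.center D) a)
    (hgen : K ≤ divClosure D ((F' : Set D) ∪ T)) :
    ∃ (n : ℕ) (k : Fin n → D), (∀ j, k j ∈ K) ∧
      ∀ x ∈ K, ∃ c : Fin n → D, (∀ j, c j ∈ F') ∧ x = ∑ j, c j * k j := by
  have hF'comm : ∀ x ∈ F', ∀ y ∈ F', x * y = y * x := fun x hx y hy =>
    hKcomm x (hFK hx) y (hFK hy)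
  letI instK : Field ↥K := fieldOfComm hKdiv hKcomm
  letI instF : Field ↥F' := fieldOfComm hF'div hF'comm
  letI : Algebra ↥F' ↥K := (Subring.inclusion hFK).toAlgebra
  set T' : Set ↥K := {x : ↥K | (x : D) ∈ T} with hT'def
  haveI : Finite ↥T' :=
    (Set.Finite.preimage (Subtype.val_injective.injOn) hTfin).to_subtype
  have hint : ∀ x ∈ T', IsIntegral ↥F' x := by
    intro x hx
    obtain ⟨p, hp0, hpe⟩ := halg (x : D)
    set ι : ↥(Subring.center D) →+* ↥F' := Subring.inclusion hcF' with hι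
    have hinj : Function.Injective ι := fun a b hab =>
      Subtype.ext (congrArg (Subtype.val : ↥F' → D) hab)
    have hq0 : p.map ι ≠ 0 := by
      intro hq
      exact hp0 (Polynomial.map_injective ι hinj (by simpa using hq))
    refine IsAlgebraic.isIntegral ⟨p.map ι, hq0, ?_⟩
    apply Subtype.val_injective
    have : (K.subtype) ((Polynomial.aeval x) (p.map ι)) = 0 := by
      rw [Polynomial.aeval_def, Polynomial.eval₂_map, Polynomial.hom_eval₂]
      have hcomp : (K.subtype.comp ((algebraMap ↥F' ↥K).comp ι)) =
          algebraMap (Subring.center D) D := by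
        ext c; rfl
      rw [hcomp]
      rw [Polynomial.aeval_def] at hpe
      exact hpe
    simpa using this
  set A : IntermediateField ↥F' ↥K := IntermediateField.adjoin ↥F' T' with hA
  haveI hfd : FiniteDimensional ↥F' A := IntermediateField.finiteDimensional_adjoin hint
  have hAtop : A = ⊤ := by
    rw [eq_top_iff]
    intro x _
    set J : Subring D := A.toSubring.map K.subtype with hJ
    have hJdiv : IsDivisionSubring J := by
      rintro y ⟨z, hz, rfl⟩
      exact ⟨z⁻¹, A.inv_mem hz, rfl⟩
    have hsub : ((F' : Set D) ∪ T) ⊆ J := by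
      rintro y (hy | hy)
      · exact ⟨algebraMap ↥F' ↥K ⟨y, hy⟩, A.algebraMap_mem _, rfl⟩
      · exact ⟨⟨y, hTK hy⟩, IntermediateField.subset_adjoin _ _ hy, rfl⟩
    have hKJ : (K : Subring D) ≤ J := le_trans hgen (divClosure_le hsub hJdiv)
    obtain ⟨z, hz, hzx⟩ := hKJ x.2
    rwa [show z = x from Subtype.val_injective hzx] at hz
  haveI : FiniteDimensional ↥F' ↥K := by
    rw [hAtop] at hfd
    exact Module.Finite.equiv IntermediateField.topEquiv.toLinearEquiv
  obtain ⟨s, hs⟩ := Module.finite_def.1 ‹Module.Finite ↥F' ↥K›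
  set n := s.card with hn
  set e := s.equivFin with he
  refine ⟨n, fun j => ((e.symm j : ↥K) : D), fun j => ((e.symm j : ↥K)).2, ?_⟩
  intro x hx
  have hxs : (⟨x, hx⟩ : ↥K) ∈ Submodule.span ↥F' (s : Set ↥K) := by
    rw [hs]; trivial
  obtain ⟨f, -, hf⟩ := Submodule.mem_span_finset.1 hxs
  refine ⟨fun j => ((f (e.symm j) : ↥F') : D), fun j => (f (e.symm j)).2, ?_⟩
  have hco : ((∑ i ∈ s, f i • i : ↥K) : D) = x := by rw [hf]
  have hterm : ∀ i : ↥K, ((f i • i : ↥K) : D) = ((f i : ↥F') : D) * (i : D) := fun i => by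
    rw [Algebra.smul_def]; rfl
  have hsum : ((∑ i ∈ s, f i • i : ↥K) : D) = ∑ i ∈ s, ((f i : ↥F') : D) * (i : D) := by
    rw [AddSubmonoidClass.coe_finset_sum]
    exact Finset.sum_congr rfl fun i _ => hterm i
  rw [← hco, hsum, ← Finset.sum_coe_sort s (fun i => ((f i : ↥F') : D) * (i : D))]
  exact (Equiv.sum_comp e.symm (fun i => ((f i : ↥F') : D) * ((i : ↥K) : D))).symm

/-- The operator `x ↦ ∑ j, a j * x * k j`. -/
def opApp {n : ℕ} (k a : Fin n → D) (x : D) : D := ∑ j, a j * x * k j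

/-- Right `K`-linear independence of a family. -/
def RIndep (K : Subring D) {m : ℕ} (v : Fin m → D) : Prop :=
  ∀ u : Fin m → D, (∀ i, u i ∈ K) → ∑ i, v i * u i = 0 → ∀ i, u i = 0

section Ops

variable {n : ℕ} {k : Fin n → D} {E K F' : Subring D}

theorem opApp_mem (hk : ∀ j, k j ∈ K) (hKE : K ≤ E) {a : Fin n → D}
    (ha : ∀ j, a j ∈ E) {x : D} (hx : x ∈ E) : opApp k a x ∈ E :=
  Subring.sum_mem _ fun j _ => E.mul_mem (E.mul_mem (ha j) hx) (hKE (hk j))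

theorem opApp_add (a b : Fin n → D) (x : D) :
    opApp k (fun j => a j + b j) x = opApp k a x + opApp k b x := by
  simp [opApp, add_mul, Finset.sum_add_distrib]

theorem opApp_sub (a b : Fin n → D) (x : D) :
    opApp k (fun j => a j - b j) x = opApp k a x - opApp k b x := by
  simp [opApp, sub_mul, Finset.sum_sub_distrib]

theorem opApp_smulL (e : D) (a : Fin n → D) (x : D) :
    opApp k (fun j => e * a j) x = e * opApp k a x := by
  simp only [opApp, Finset.mul_sum, mul_assoc]

theorem opApp_combL {m : ℕ} (g : Fin m → D) (as : Fin m → Fin n → D) (x : D) :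
    opApp k (fun j => ∑ i, g i * as i j) x = ∑ i, g i * opApp k (as i) x := by
  simp only [opApp, Finset.sum_mul, Finset.mul_sum]
  rw [Finset.sum_comm]
  exact Finset.sum_congr rfl fun i _ => Finset.sum_congr rfl fun j _ => by simp [mul_assoc]

variable (hk : ∀ j, k j ∈ K) (hKE : K ≤ E)
  (hF'E : ∀ c ∈ F', ∀ x ∈ E, c * x = x * c) (hF'K : F' ≤ K)
  (hspan : ∀ x ∈ K, ∃ c : Fin n → D, (∀ j, c j ∈ F') ∧ x = ∑ j, c j * k j)

include hk hKE hF'E hF'K hspan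

theorem opApp_exists_id :
    ∃ c : Fin n → D, (∀ j, c j ∈ F') ∧ ∀ x ∈ E, opApp k c x = x := by
  obtain ⟨c, hcF, hc1⟩ := hspan 1 K.one_mem
  refine ⟨c, hcF, fun x hx => ?_⟩
  have : x = x * ∑ j, c j * k j := by rw [← hc1, mul_one]
  rw [opApp]
  calc ∑ j, c j * x * k j = ∑ j, x * c j * k j := by
        refine Finset.sum_congr rfl fun j _ => ?_
        rw [hF'E (c j) (hcF j) x hx]
    _ = x * ∑ j, c j * k j := by
        rw [Finset.mul_sum]
        exact Finset.sum_congr rfl fun j _ => by rw [mul_assoc]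
    _ = x := by rw [← this]

theorem opApp_exists_rmul {a : Fin n → D} (haE : ∀ j, a j ∈ E) {kk : D} (hkk : kk ∈ K) :
    ∃ a' : Fin n → D, (∀ j, a' j ∈ E) ∧ ∀ x ∈ E, opApp k a' x = opApp k a x * kk := by
  have hmem : ∀ j, k j * kk ∈ K := fun j => K.mul_mem (hk j) hkk
  choose c hcF hc using fun j => hspan _ (hmem j)
  refine ⟨fun l => ∑ j, a j * c j l,
    fun l => Subring.sum_mem _ fun j _ => E.mul_mem (haE j) (hKE (hF'K (hcF j l))), ?_⟩
  intro x hx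
  rw [show (fun l => ∑ j, a j * c j l) = fun l => ∑ j, (a j * c j l) from rfl]
  calc opApp k (fun l => ∑ j, a j * c j l) x
      = ∑ l, (∑ j, a j * c j l) * x * k l := rfl
    _ = ∑ l, ∑ j, a j * c j l * x * k l := by
        refine Finset.sum_congr rfl fun l _ => ?_
        rw [Finset.sum_mul, Finset.sum_mul]
    _ = ∑ j, ∑ l, a j * c j l * x * k l := Finset.sum_comm
    _ = ∑ j, a j * x * (k j * kk) := by
        refine Finset.sum_congr rfl fun j _ => ?_
        rw [hc j, Finset.mul_sum]
        refine Finset.sum_congr rfl fun l _ => ?_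
        have hcx := hF'E (c j l) (hcF j l) x hx
        calc a j * c j l * x * k l = a j * (c j l * x) * k l := by
              rw [mul_assoc (a j)]
          _ = a j * (x * c j l) * k l := by rw [hcx]
          _ = a j * x * (c j l * k l) := by rw [← mul_assoc, mul_assoc]
    _ = (∑ j, a j * x * k j) * kk := by
        rw [Finset.sum_mul]
        exact Finset.sum_congr rfl fun j _ => by rw [mul_assoc, mul_assoc, mul_assoc]
    _ = opApp k a x * kk := rfl

end Ops

section Density

variable {n : ℕ} {k : Fin n → D} {E K F' : Subring D}
variable (hk : ∀ j, k j ∈ K) (hKE : K ≤ E) (hEdiv : IsDivisionSubring E)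
  (hKcent : ∀ x ∈ E, (∀ y ∈ K, x * y = y * x) → x ∈ K)
  (hF'E : ∀ c ∈ F', ∀ x ∈ E, c * x = x * c) (hF'K : F' ≤ K)
  (hspan : ∀ x ∈ K, ∃ c : Fin n → D, (∀ j, c j ∈ F') ∧ x = ∑ j, c j * k j)

include hk hKE hEdiv hKcent hF'E hF'K hspan

theorem density_surj :
    ∀ (m : ℕ) (v : Fin m → D), (∀ i, v i ∈ E) → RIndep K v →
      ∀ w : Fin m → D, (∀ i, w i ∈ E) →
      ∃ a : Fin n → D, (∀ j, a j ∈ E) ∧ ∀ i, opApp k a (v i) = w i := by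
  intro m
  induction m with
  | zero => exact fun v _ _ w _ =>
      ⟨fun _ => 0, fun j => E.zero_mem, fun i => i.elim0⟩
  | succ m ih =>
    intro v hvE hvI w hwE
    set v' : Fin m → D := fun i => v i.castSucc with hv'def
    have hv'E : ∀ i, v' i ∈ E := fun i => hvE _
    have hv'I : RIndep K v' := by
      intro u hu hsum i
      have h0 := hvI (Fin.snoc u 0)
        (fun i' => Fin.lastCases (by simp [K.zero_mem]) (fun i'' => by simp [hu i'']) i')
        (by
          rw [Fin.sum_univ_castSucc]
          simp only [Fin.snoc_castSucc, Fin.snoc_last, mul_zero, add_zero]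
          exact hsum)
      have h := h0 i.castSucc
      simpa using h
    have hsel : ∀ i0 : Fin m, ∃ a : Fin n → D, (∀ j, a j ∈ E) ∧
        ∀ i, opApp k a (v' i) = if i = i0 then 1 else 0 := fun i0 =>
      ih v' hv'E hv'I (fun i => if i = i0 then 1 else 0)
        (fun i => by by_cases hii : i = i0 <;> simp [hii, E.one_mem, E.zero_mem])
    choose sel hselE hselV using hsel
    have hsep : ∃ a : Fin n → D, (∀ j, a j ∈ E) ∧ (∀ i, opApp k a (v' i) = 0) ∧
        opApp k a (v (Fin.last m)) = 1 := by
      by_cases hc : ∃ a : Fin n → D, (∀ j, a j ∈ E) ∧ (∀ i, opApp k a (v' i) = 0) ∧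
          opApp k a (v (Fin.last m)) ≠ 0
      · obtain ⟨a, haE, haV, haL⟩ := hc
        set e := (opApp k a (v (Fin.last m)))⁻¹ with hedef
        have heE : e ∈ E := hEdiv _ (opApp_mem hk hKE haE (hvE _))
        refine ⟨fun j => e * a j, fun j => E.mul_mem heE (haE j), fun i => ?_, ?_⟩
        · rw [opApp_smulL, haV i, mul_zero]
        · rw [opApp_smulL, hedef, inv_mul_cancel₀ haL]
      · have hkill : ∀ a : Fin n → D, (∀ j, a j ∈ E) → (∀ i, opApp k a (v' i) = 0) →
            opApp k a (v (Fin.last m)) = 0 := by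
          intro a h1 h2
          by_contra hne
          exact hc ⟨a, h1, h2, hne⟩
        set u : Fin m → D := fun i => opApp k (sel i) (v (Fin.last m)) with hudef
        have huE : ∀ i, u i ∈ E := fun i => opApp_mem hk hKE (hselE i) (hvE _)
        have hstar : ∀ c : Fin n → D, (∀ j, c j ∈ E) →
            opApp k c (v (Fin.last m)) = ∑ i, opApp k c (v' i) * u i := by
          intro c hcE
          set a : Fin n → D := fun j => c j - ∑ i, opApp k c (v' i) * sel i j with hadef
          have haE : ∀ j, a j ∈ E := fun j =>
            E.sub_mem (hcE j) (Subring.sum_mem _ fun i _ =>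
              E.mul_mem (opApp_mem hk hKE hcE (hv'E i)) (hselE i j))
          have hopa : ∀ x : D, opApp k a x =
              opApp k c x - ∑ i, opApp k c (v' i) * opApp k (sel i) x := by
            intro x
            rw [hadef]
            rw [show (fun j => c j - ∑ i, opApp k c (v' i) * sel i j) =
              (fun j => c j - (fun j' => ∑ i, opApp k c (v' i) * sel i j') j) from rfl]
            rw [opApp_sub, opApp_combL]
          have haV : ∀ i', opApp k a (v' i') = 0 := by
            intro i'
            rw [hopa]
            have : ∑ i, opApp k c (v' i) * opApp k (sel i) (v' i') = opApp k c (v' i') := by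
              rw [Finset.sum_congr rfl (fun i (_ : i ∈ Finset.univ) => by rw [hselV i i'])]
              simp
            rw [this, sub_self]
          have := hkill a haE haV
          rw [hopa] at this
          exact sub_eq_zero.mp this
        have huK : ∀ i, u i ∈ K := by
          intro i
          refine hKcent _ (huE i) ?_
          intro kk hkk
          obtain ⟨a', ha'E, ha'V⟩ := opApp_exists_rmul hk hKE hF'E hF'K hspan (hselE i) hkk
          have h1 := hstar a' ha'E
          rw [ha'V _ (hvE _)] at h1
          have h2 : ∑ i', opApp k a' (v' i') * u i' = kk * u i := by
            rw [Finset.sum_congr rfl (fun i' (_ : i' ∈ Finset.univ) => by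
              rw [ha'V _ (hv'E i'), hselV i i'])]
            simp
          rw [h2] at h1
          exact h1
        obtain ⟨c0, hc0F, hc0id⟩ := opApp_exists_id hk hKE hF'E hF'K hspan
        have hc0E : ∀ j, c0 j ∈ E := fun j => hKE (hF'K (hc0F j))
        have hq := hstar c0 hc0E
        rw [hc0id _ (hvE _)] at hq
        have hq' : ∑ i, v' i * u i = v (Fin.last m) := by
          rw [hq]
          exact Finset.sum_congr rfl fun i _ => by rw [hc0id _ (hv'E i)]
        exfalso
        have hdep := hvI (Fin.snoc u (-1))
          (fun i' => Fin.lastCases (by simp [K.neg_mem K.one_mem]) (fun i'' => by simp [huK i'']) i')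
          (by
            rw [Fin.sum_univ_castSucc]
            simp only [Fin.snoc_castSucc, Fin.snoc_last]
            rw [show (∑ i : Fin m, v i.castSucc * u i) = ∑ i, v' i * u i from rfl, hq',
              mul_neg_one, add_neg_cancel])
        have := hdep (Fin.last m)
        simp only [Fin.snoc_last] at this
        exact absurd this (by norm_num)
    obtain ⟨a2, ha2E, ha2V, ha2L⟩ := hsep
    obtain ⟨a1, ha1E, ha1V⟩ := ih v' hv'E hv'I (fun i => w i.castSucc) (fun i => hwE _)
    set d := w (Fin.last m) - opApp k a1 (v (Fin.last m)) with hddef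
    have hdE : d ∈ E := E.sub_mem (hwE _) (opApp_mem hk hKE ha1E (hvE _))
    refine ⟨fun j => a1 j + d * a2 j,
      fun j => E.add_mem (ha1E j) (E.mul_mem hdE (ha2E j)), ?_⟩
    have hcalc : ∀ x : D, opApp k (fun j => a1 j + d * a2 j) x =
        opApp k a1 x + d * opApp k a2 x := by
      intro x
      rw [show (fun j => a1 j + d * a2 j) = (fun j => a1 j + (fun j' => d * a2 j') j) from rfl]
      rw [opApp_add, opApp_smulL]
    intro i
    refine Fin.lastCases ?_ (fun i' => ?_) i
    · rw [hcalc, ha2L, mul_one, hddef]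
      abel
    · rw [hcalc, show v i'.castSucc = v' i' from rfl, ha1V, ha2V, mul_zero, add_zero]

end Density

section Bound

variable {n : ℕ} {k : Fin n → D} {E K F' : Subring D}
variable (hk : ∀ j, k j ∈ K) (hKE : K ≤ E) (hEdiv : IsDivisionSubring E)
  (hKdiv : IsDivisionSubring K)
  (hKcent : ∀ x ∈ E, (∀ y ∈ K, x * y = y * x) → x ∈ K)
  (hF'E : ∀ c ∈ F', ∀ x ∈ E, c * x = x * c) (hF'K : F' ≤ K)
  (hspan : ∀ x ∈ K, ∃ c : Fin n → D, (∀ j, c j ∈ F') ∧ x = ∑ j, c j * k j)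

include hk hKE hEdiv hKdiv hKcent hF'E hF'K hspan

theorem rindep_le {m : ℕ} (v : Fin m → D) (hvE : ∀ i, v i ∈ E) (hvI : RIndep K v) :
    m ≤ n := by
  classical
  have hδ : ∀ i0 : Fin m, ∃ a : Fin n → D, ∀ i, opApp k a (v i) = if i = i0 then 1 else 0 := by
    intro i0
    obtain ⟨a, -, ha⟩ := density_surj hk hKE hEdiv hKcent hF'E hF'K hspan m v hvE hvI
      (fun i => if i = i0 then 1 else 0)
      (fun i => by by_cases hii : i = i0 <;> simp [hii, E.one_mem, E.zero_mem])
    exact ⟨a, ha⟩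
  set P : Fin n → (Fin m → D) := fun j i => v i * k j with hPdef
  have htop : (⊤ : Submodule D (Fin m → D)) ≤ Submodule.span D (Set.range P) := by
    rw [← (Pi.basisFun D (Fin m)).span_eq]
    refine Submodule.span_le.2 ?_
    rintro _ ⟨i0, rfl⟩
    obtain ⟨a, ha⟩ := hδ i0
    have heq : (Pi.basisFun D (Fin m)) i0 = ∑ j, a j • P j := by
      funext i
      have h1 : (∑ j, a j • P j) i = ∑ j, a j * (v i * k j) := by
        rw [Finset.sum_apply]
        rfl
      have h2 : ∑ j, a j * (v i * k j) = opApp k a (v i) := by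
        simp [opApp, mul_assoc]
      rw [h1, h2, ha i, Pi.basisFun_apply]
      simp [Pi.single_apply]
    rw [heq]
    exact Submodule.sum_mem _ fun j _ =>
      Submodule.smul_mem _ _ (Submodule.subset_span ⟨j, rfl⟩)
  have hspanP : Submodule.span D (Set.range P) = ⊤ := le_antisymm le_top htop
  have h1 : (m : Cardinal.{u}) ≤ n := by
    calc (m : Cardinal.{u}) = Module.rank D (Fin m → D) := (rank_fin_fun m).symm
      _ = Module.rank D ↥(⊤ : Submodule D (Fin m → D)) := (rank_top D _).symm
      _ = Module.rank D ↥(Submodule.span D (Set.range P)) := by rw [hspanP]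
      _ ≤ Cardinal.mk (Set.range P) := rank_span_le _
      _ = (Fintype.card (Set.range P) : Cardinal.{u}) := Cardinal.mk_fintype _
      _ ≤ (n : Cardinal.{u}) := by
          have hcard := Fintype.card_range_le P
          rw [Fintype.card_fin] at hcard
          exact_mod_cast hcard
  exact_mod_cast h1

/-- `E` is right-`K`-spanned by at most `n` elements. -/
theorem exists_right_basis :
    ∃ (m : ℕ) (v : Fin m → D), (∀ i, v i ∈ E) ∧
      ∀ x ∈ E, ∃ u : Fin m → D, (∀ i, u i ∈ K) ∧ x = ∑ i, v i * u i := by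
  classical
  set Q : ℕ → Prop := fun m => ∃ v : Fin m → D, (∀ i, v i ∈ E) ∧ RIndep K v with hQ
  have hQ0 : Q 0 := ⟨fun i => i.elim0, fun i => i.elim0, fun u _ _ i => i.elim0⟩
  have hbound : ∀ m, Q m → m ≤ n := by
    rintro m ⟨v, hvE, hvI⟩
    exact rindep_le hk hKE hEdiv hKdiv hKcent hF'E hF'K hspan v hvE hvI
  set m0 := Nat.findGreatest Q n with hm0
  have hQm0 : Q m0 := Nat.findGreatest_spec (Nat.zero_le n) hQ0
  have hnot : ¬ Q (m0 + 1) := by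
    intro hq
    have hle : m0 + 1 ≤ n := hbound _ hq
    exact Nat.findGreatest_is_greatest (Nat.lt_succ_self m0) hle hq
  obtain ⟨v, hvE, hvI⟩ := hQm0
  refine ⟨m0, v, hvE, ?_⟩
  intro x hx
  have hdep : ¬ RIndep K (Fin.snoc v x : Fin (m0 + 1) → D) := by
    intro hind
    exact hnot ⟨Fin.snoc v x,
      fun i => Fin.lastCases (by simpa using hx) (fun i' => by simpa using hvE i') i, hind⟩
  rw [RIndep] at hdep
  push_neg at hdep
  obtain ⟨u, huK, husum, i1, hi1⟩ := hdep
  have hsum' : (∑ i, v i * u i.castSucc) + x * u (Fin.last m0) = 0 := by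
    rw [← husum, Fin.sum_univ_castSucc]
    simp [Fin.snoc_castSucc, Fin.snoc_last]
  by_cases hlast : u (Fin.last m0) = 0
  · exfalso
    have hi1' : i1 ≠ Fin.last m0 := fun h => hi1 (h ▸ hlast)
    obtain ⟨i2, hi2⟩ := Fin.exists_castSucc_eq.2 hi1'
    have := hvI (fun i => u i.castSucc) (fun i => huK _)
      (by rw [← hsum'] ; rw [hlast, mul_zero, add_zero])
    exact hi1 (by rw [← hi2]; exact this i2)
  · set q := u (Fin.last m0) with hqdef
    refine ⟨fun i => -(u i.castSucc * q⁻¹), fun i => K.neg_mem (K.mul_mem (huK _)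
      (hKdiv _ (huK _))), ?_⟩
    have h3 : x * q = -(∑ i, v i * u i.castSucc) := eq_neg_of_add_eq_zero_right hsum'
    calc x = x * q * q⁻¹ := by rw [mul_assoc, mul_inv_cancel₀ hlast, mul_one]
      _ = -(∑ i, v i * u i.castSucc) * q⁻¹ := by rw [h3]
      _ = ∑ i, v i * -(u i.castSucc * q⁻¹) := by
          rw [neg_mul, Finset.sum_mul, ← Finset.sum_neg_distrib]
          exact Finset.sum_congr rfl fun i _ => by rw [mul_assoc, mul_neg]

end Bound

end Aux

/-- If a division ring `D` is strongly algebraic over its center, then `D` is locally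
linear. -/
theorem stmt8 (D : Type u) [DivisionRing D] (h : IsStronglyAlgebraic D) :
    IsLocallyLinear D := by
  classical
  obtain ⟨halg, K, S, hKmax, hSK, hKgen, hfin⟩ := h
  have hKdiv := hKmax.1
  have hKcomm := hKmax.2.1
  have hFK := hKmax.2.2.1
  intro X
  set T : Set D := ⋃ x ∈ (X : Set D), {y ∈ S | x * y ≠ y * x} with hTdef
  have hTfin : T.Finite := Set.Finite.biUnion X.finite_toSet fun x _ => hfin x
  have hTS : T ⊆ S := by
    intro y hy
    simp only [hTdef, Set.mem_iUnion] at hy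
    obtain ⟨x, -, hy, -⟩ := hy
    exact hy
  set S' : Set D := S \ T with hS'def
  set E : Subring D := Subring.centralizer S' with hEdef
  have hEdiv : IsDivisionSubring E := centralizer_isDivisionSubring S'
  have hXE : (X : Set D) ⊆ E := by
    intro x hx
    rw [hEdef, SetLike.mem_coe, Subring.mem_centralizer_iff]
    intro g hg
    by_contra hne
    exact hg.2 (Set.mem_biUnion hx ⟨hg.1, fun hcomm => hne (by rw [hcomm])⟩)
  have hKE : K ≤ E := by
    intro y hy
    rw [hEdef, Subring.mem_centralizer_iff]
    intro g hg
    exact hKcomm g (hSK hg.1) y hy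
  set F' : Subring D := divClosure D ((Subring.center D : Set D) ∪ S') with hF'def
  have hF'div : IsDivisionSubring F' := divClosure_isDivisionSubring _
  have hF'K : F' ≤ K :=
    divClosure_le (Set.union_subset hFK fun s hs => hSK hs.1) hKdiv
  have hcF' : Subring.center D ≤ F' := fun c hc => subset_divClosure _ (Or.inl hc)
  have hF'E : ∀ c ∈ F', ∀ x ∈ E, c * x = x * c := by
    have hle : F' ≤ Subring.centralizer (E : Set D) := by
      refine divClosure_le (Set.union_subset ?_ ?_) (centralizer_isDivisionSubring _)
      · intro c hc
        exact Subring.center_le_centralizer (E : Set D) hc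
      · intro s hs
        rw [SetLike.mem_coe, Subring.mem_centralizer_iff]
        intro g hg
        exact (Subring.mem_centralizer_iff.1 hg s hs).symm
    intro c hc x hx
    exact (Subring.mem_centralizer_iff.1 (hle hc) x hx).symm
  have hKcent : ∀ x ∈ E, (∀ y ∈ K, x * y = y * x) → x ∈ K := fun x _ hx =>
    mem_of_comm_maximalSubfield hKmax x hx
  have hgen : K ≤ divClosure D ((F' : Set D) ∪ T) := by
    rw [hKgen]
    refine divClosure_le ?_ (divClosure_isDivisionSubring _)
    rintro y (hy | hy)
    · exact subset_divClosure _ (Or.inl (hcF' hy))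
    · by_cases hyT : y ∈ T
      · exact subset_divClosure _ (Or.inr hyT)
      · exact subset_divClosure _ (Or.inl (subset_divClosure _ (Or.inr ⟨hy, hyT⟩)))
  obtain ⟨n, kb, hkb, hspan⟩ := span_finite_of_adjoin_algebraic hKdiv hKcomm hF'div hF'K
    hcF' hTfin (fun t ht => hSK (hTS ht)) halg hgen
  obtain ⟨m, v, hvE, hvspan⟩ := exists_right_basis hkb hKE hEdiv hKdiv hKcent hF'E hF'K hspan
  set g : Fin m × Fin n → D := fun p => v p.1 * kb p.2 with hgdef
  have hgE : ∀ p, g p ∈ E := fun p => E.mul_mem (hvE p.1) (hKE (hkb p.2))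
  have hspanE : ∀ x ∈ E, ∃ c : Fin m × Fin n → D, (∀ p, c p ∈ F') ∧ x = ∑ p, c p * g p := by
    intro x hx
    obtain ⟨u, huK, hux⟩ := hvspan x hx
    choose c hcF hceq using fun i => hspan (u i) (huK i)
    refine ⟨fun p => c p.1 p.2, fun p => hcF p.1 p.2, ?_⟩
    rw [hux, Fintype.sum_prod_type]
    refine Finset.sum_congr rfl fun i _ => ?_
    rw [hceq i, Finset.mul_sum]
    refine Finset.sum_congr rfl fun j _ => ?_
    rw [← mul_assoc, ← hF'E (c i j) (hcF i j) (v i) (hvE i), mul_assoc]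
  letI instE : DivisionRing ↥E := hEdiv.divisionRing
  refine ⟨E, hXE, hEdiv, ⟨⟨↥E, RingHom.id ↥E, fun a b hab => hab, ?_⟩⟩⟩
  show Module.Finite (Subring.center ↥E) ↥E
  constructor
  set gE : Fin m × Fin n → ↥E := fun p => (⟨g p, hgE p⟩ : ↥E) with hgEdef
  refine ⟨Finset.univ.image gE, ?_⟩
  rw [Finset.coe_image, Finset.coe_univ, Set.image_univ, eq_top_iff]
  intro x _
  obtain ⟨c, hcF, hceq⟩ := hspanE (x : D) x.2
  have hcE : ∀ p, c p ∈ E := fun p => hKE (hF'K (hcF p))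
  have hcZ : ∀ p, (⟨c p, hcE p⟩ : ↥E) ∈ Subring.center ↥E := by
    intro p
    rw [Subring.mem_center_iff]
    intro z
    exact Subtype.ext (hF'E (c p) (hcF p) (z : D) z.2).symm
  have hxeq : x = ∑ p, (⟨⟨c p, hcE p⟩, hcZ p⟩ : Subring.center ↥E) • gE p := by
    apply Subtype.ext
    rw [hceq, AddSubmonoidClass.coe_finset_sum]
    exact Finset.sum_congr rfl fun p _ => rfl
  rw [hxeq]
  exact Submodule.sum_mem _ fun p _ =>
    Submodule.smul_mem _ _ (Submodule.subset_span ⟨p, rfl⟩)
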